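/- Let n ≥ 2, let ζ = exp(2πi/n) ∈ ℂ, and let t ∈ ℂ with |t| = 1. Then the derivative of f_t factors as derivative f_t = C (n : ℝ) * ∏_{k=1}^{n-1} (X − C (cos(π·k/n))). In particular, the roots of f_t′ are exactly the numbers cos(π·k/n), k = 1, …, n−1, and they do not depend on t; these roots occur in pairs ±cos(π·j/n), so the vertical lines through them are tangent to the circles centered at the center of the n-gon tangent to its diagonals. -/

import Mathlib

open Polynomial Finset Real

private lemma prod_sub_pow_aux {n : ℕ} (hn : n ≠ 0) {ζ : ℂ} (hζ : IsPrimitiveRoot ζ n) (u : ℂ) :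
    ∏ k ∈ Finset.range n, (u - ζ ^ k) = u ^ n - 1 := by
  have h := X_pow_sub_C_eq_prod hζ (Nat.pos_of_ne_zero hn) (one_pow n)
  have h2 := congrArg (Polynomial.eval u) h
  simpa [Polynomial.eval_prod] using h2.symm

private lemma prod_sub_mul_pow {n : ℕ} (hn : n ≠ 0) {ζ : ℂ} (hζ : IsPrimitiveRoot ζ n)
    {a : ℂ} (ha : a ≠ 0) (u : ℂ) :
    ∏ k ∈ Finset.range n, (u - a * ζ ^ k) = u ^ n - a ^ n := by
  have h1 : ∀ k ∈ Finset.range n, (u - a * ζ ^ k) = a * (u / a - ζ ^ k) := by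
    intro k _; field_simp
  rw [Finset.prod_congr rfl h1, Finset.prod_mul_distrib, Finset.prod_const, Finset.card_range,
    prod_sub_pow_aux hn hζ, div_pow]
  field_simp

private lemma factor_key {u w : ℂ} (hu : u ≠ 0) (hw : w ≠ 0) :
    ((u + u⁻¹) / 2 - (w + w⁻¹) / 2) * (2 * u * w) = (u - w) * (u * w - 1) := by
  field_simp; ring

private lemma re_cast {w : ℂ} (hw : ‖w‖ = 1) :
    ((w.re : ℂ)) = (w + w⁻¹) / 2 := by
  rw [Complex.inv_eq_conj (by exact hw)]
  rw [Complex.add_conj]; push_cast; ring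

private lemma cos_cast (θ : ℝ) :
    ((Real.cos θ : ℂ)) = (Complex.exp (θ * Complex.I) + (Complex.exp (θ * Complex.I))⁻¹) / 2 := by
  rw [Complex.ofReal_cos, Complex.cos, ← Complex.exp_neg]; ring_nf

private lemma prod_zeta {n : ℕ} (hn : 2 ≤ n) {ζ : ℂ}
    (hζ : ζ = Complex.exp (2 * Real.pi * Complex.I / n)) :
    ∏ k ∈ Finset.range n, ζ ^ k = (-1 : ℂ) ^ (n - 1) := by
  have hn0 : (n : ℂ) ≠ 0 := Nat.cast_ne_zero.mpr (by omega)
  rw [Finset.prod_pow_eq_pow_sum]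
  set m := ∑ k ∈ Finset.range n, k with hm
  have hm2 : m * 2 = n * (n - 1) := Finset.sum_range_id_mul_two n
  have hm2' : (m : ℂ) * 2 = (n : ℂ) * ((n : ℂ) - 1) := by
    have := congrArg (fun x : ℕ => (x : ℂ)) hm2
    push_cast [Nat.cast_sub (by omega : 1 ≤ n)] at this
    exact this
  have hexp : ζ ^ m = Complex.exp ((m : ℂ) * (2 * Real.pi * Complex.I / n)) := by
    rw [hζ, ← Complex.exp_nat_mul]
  rw [hexp]
  have harg : (m : ℂ) * (2 * Real.pi * Complex.I / n) = ((n - 1 : ℕ) : ℂ) * (Real.pi * Complex.I) := by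
    push_cast [Nat.cast_sub (by omega : 1 ≤ n)]
    field_simp
    linear_combination hm2'
  rw [harg, Complex.exp_nat_mul, Complex.exp_pi_mul_I]

private lemma evalA (n : ℕ) (hn : 2 ≤ n) (ζ : ℂ)
    (hζ : ζ = Complex.exp (2 * Real.pi * Complex.I / n))
    (t : ℂ) (ht : ‖t‖ = 1) (φ : ℝ) :
    ∏ k ∈ Finset.range n, (Real.cos φ - (t * ζ ^ k).re)
      = (Real.cos (n * φ) - (t ^ n).re) / 2 ^ (n - 1) := by
  have hn0 : n ≠ 0 := by omega
  have hprim : IsPrimitiveRoot ζ n := by rw [hζ]; exact Complex.isPrimitiveRoot_exp n hn0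
  have ht0 : t ≠ 0 := by
    intro h; rw [h] at ht; simp at ht
  have hζ' : ζ = Complex.exp (((2 * Real.pi / n : ℝ) : ℂ) * Complex.I) := by
    rw [hζ]; congr 1; push_cast; ring
  have hζabs : ‖ζ‖ = 1 := by
    rw [hζ']; exact Complex.norm_exp_ofReal_mul_I _
  set u := Complex.exp ((φ : ℂ) * Complex.I) with hu_def
  have hu : u ≠ 0 := Complex.exp_ne_zero _
  have hwabs : ∀ k : ℕ, ‖t * ζ ^ k‖ = 1 := by
    intro k; rw [norm_mul, norm_pow, ht, hζabs]; simp
  have hw0 : ∀ k : ℕ, t * ζ ^ k ≠ 0 := by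
    intro k h; have := hwabs k; rw [h] at this; simp at this
  apply Complex.ofReal_injective
  rw [Complex.ofReal_prod, Complex.ofReal_div, Complex.ofReal_sub, Complex.ofReal_pow,
    Complex.ofReal_ofNat]
  simp only [Complex.ofReal_sub]
  have hfac : ∀ k ∈ Finset.range n,
      ((Real.cos φ : ℂ) - ((t * ζ ^ k).re : ℂ))
        = ((u - t * ζ ^ k) * (u * (t * ζ ^ k) - 1)) / (2 * u * (t * ζ ^ k)) := by
    intro k _
    rw [eq_div_iff (by exact mul_ne_zero (mul_ne_zero two_ne_zero hu) (hw0 k)), cos_cast,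
      re_cast (hwabs k)]
    exact factor_key hu (hw0 k)
  have hprodfac := Finset.prod_congr rfl hfac
  rw [Finset.prod_div_distrib, Finset.prod_mul_distrib] at hprodfac
  have hA1 : ∏ k ∈ Finset.range n, (u - t * ζ ^ k) = u ^ n - t ^ n :=
    prod_sub_mul_pow hn0 hprim ht0 u
  have hA2 : ∏ k ∈ Finset.range n, (u * (t * ζ ^ k) - 1) = (-1) ^ n * (1 - (u * t) ^ n) := by
    have h1 : ∀ k ∈ Finset.range n, u * (t * ζ ^ k) - 1 = (-(u * t)) * ((u * t)⁻¹ - ζ ^ k) := by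
      intro k _
      have hut : u * t ≠ 0 := mul_ne_zero hu ht0
      field_simp
      ring
    rw [Finset.prod_congr rfl h1, Finset.prod_mul_distrib, Finset.prod_const, Finset.card_range,
      prod_sub_pow_aux hn0 hprim, inv_pow]
    have hut : (u * t) ^ n ≠ 0 := pow_ne_zero _ (mul_ne_zero hu ht0)
    field_simp
    rw [neg_pow]
    ring
  have hA3 : ∏ k ∈ Finset.range n, (2 * u * (t * ζ ^ k)) = 2 ^ n * u ^ n * t ^ n * (-1) ^ (n - 1) := by
    have h1 : ∀ k ∈ Finset.range n, 2 * u * (t * ζ ^ k) = (2 * u * t) * ζ ^ k := fun k _ => by ring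
    rw [Finset.prod_congr rfl h1, Finset.prod_mul_distrib, Finset.prod_const, Finset.card_range,
      prod_zeta hn hζ, mul_pow, mul_pow]
  rw [hA1, hA2, hA3] at hprodfac
  have hneg : (-1 : ℂ) ^ n = (-1) ^ (n - 1) * (-1) := by rw [← pow_succ]; congr 1; omega
  have h2n : (2 : ℂ) ^ n = 2 ^ (n - 1) * 2 := by rw [← pow_succ]; congr 1; omega
  have ha : u ^ n ≠ 0 := pow_ne_zero _ hu
  have hb : t ^ n ≠ 0 := pow_ne_zero _ ht0
  have h2 : (2 : ℂ) ^ (n - 1) ≠ 0 := pow_ne_zero _ two_ne_zero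
  have hcne : ((-1 : ℂ)) ^ (n - 1) ≠ 0 := pow_ne_zero _ (by norm_num)
  have hun : Complex.exp ((↑(↑n * φ) : ℂ) * Complex.I) = u ^ n := by
    rw [hu_def, ← Complex.exp_nat_mul]; congr 1; push_cast; ring
  rw [cos_cast ((n : ℝ) * φ), hun,
    re_cast (show ‖t ^ n‖ = 1 by rw [norm_pow, ht, one_pow])]
  set S := ∏ k ∈ Finset.range n, ((Real.cos φ : ℂ) - ((t * ζ ^ k).re : ℂ)) with hSdef
  have hS : S * (2 ^ (n - 1) * 2 * u ^ n * t ^ n) = (u ^ n - t ^ n) * (u ^ n * t ^ n - 1) := by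
    have hM : (2 : ℂ) ^ n * u ^ n * t ^ n * (-1) ^ (n - 1) ≠ 0 :=
      mul_ne_zero (mul_ne_zero (mul_ne_zero (pow_ne_zero _ two_ne_zero) ha) hb) hcne
    rw [eq_div_iff hM] at hprodfac
    have hmul : (u * t) ^ n = u ^ n * t ^ n := mul_pow u t n
    apply mul_right_cancel₀ hcne
    linear_combination hprodfac + (-(S * u ^ n * t ^ n * (-1 : ℂ) ^ (n - 1))) * h2n +
      ((u ^ n - t ^ n) * (1 - (u * t) ^ n)) * hneg + ((u ^ n - t ^ n) * (-1 : ℂ) ^ (n - 1)) * hmul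
  apply mul_right_cancel₀ (show (2 : ℂ) ^ (n - 1) * 2 * u ^ n * t ^ n ≠ 0 from
    mul_ne_zero (mul_ne_zero (mul_ne_zero h2 two_ne_zero) ha) hb)
  rw [hS]
  field_simp
  ring

private lemma sin_cast (θ : ℝ) :
    ((Real.sin θ : ℂ)) = ((Complex.exp (θ * Complex.I))⁻¹ - Complex.exp (θ * Complex.I)) * Complex.I / 2 := by
  rw [Complex.ofReal_sin, Complex.sin, ← Complex.exp_neg]; ring_nf

private lemma evalB (n : ℕ) (hn : 2 ≤ n) (φ : ℝ) :
    2 ^ (n - 1) * Real.sin φ *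
        ∏ k ∈ Finset.Icc 1 (n - 1), (Real.cos φ - Real.cos (Real.pi * k / n))
      = Real.sin (n * φ) := by
  have hn0 : (n : ℝ) ≠ 0 := Nat.cast_ne_zero.mpr (by omega)
  set ω := Complex.exp (2 * Real.pi * Complex.I / (2 * n : ℕ)) with hωdef
  have hprim : IsPrimitiveRoot ω (2 * n) := Complex.isPrimitiveRoot_exp (2 * n) (by omega)
  have hω0 : ω ≠ 0 := Complex.exp_ne_zero _
  have hωk : ∀ k : ℕ, ω ^ k = Complex.exp ((Real.pi * k / n : ℝ) * Complex.I) := by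
    intro k
    rw [hωdef, ← Complex.exp_nat_mul]
    congr 1
    push_cast
    field_simp
  have hcosk : ∀ k : ℕ, ((Real.cos (Real.pi * k / n) : ℂ)) = (ω ^ k + (ω ^ k)⁻¹) / 2 := by
    intro k; rw [cos_cast, ← hωk k]
  set u := Complex.exp ((φ : ℂ) * Complex.I) with hu_def
  have hu : u ≠ 0 := Complex.exp_ne_zero _
  apply Complex.ofReal_injective
  rw [Complex.ofReal_mul, Complex.ofReal_mul, Complex.ofReal_prod, Complex.ofReal_pow,
    Complex.ofReal_ofNat]
  simp only [Complex.ofReal_sub]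
  have hfac : ∀ k ∈ Finset.Icc 1 (n - 1),
      ((Real.cos φ : ℂ) - ((Real.cos (Real.pi * k / n) : ℝ) : ℂ))
        = ((u - ω ^ k) * (u * ω ^ k - 1)) / (2 * u * ω ^ k) := by
    intro k _
    rw [eq_div_iff (mul_ne_zero (mul_ne_zero two_ne_zero hu) (pow_ne_zero _ hω0)), cos_cast,
      hcosk k]
    exact factor_key hu (pow_ne_zero _ hω0)
  have hprodfac := Finset.prod_congr rfl hfac
  rw [Finset.prod_div_distrib, Finset.prod_mul_distrib] at hprodfac
  -- second factor product
  have hB2 : ∏ k ∈ Finset.Icc 1 (n - 1), (u * ω ^ k - 1)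
      = (∏ k ∈ Finset.Icc 1 (n - 1), ω ^ k) * ∏ k ∈ Finset.Icc 1 (n - 1), (u - ω ^ (2 * n - k)) := by
    rw [← Finset.prod_mul_distrib]
    apply Finset.prod_congr rfl
    intro k hk
    have hk' := Finset.mem_Icc.mp hk
    have hx : ω ^ k * ω ^ (2 * n - k) = 1 := by
      rw [← pow_add, show k + (2 * n - k) = 2 * n by omega, hprim.pow_eq_one]
    linear_combination hx
  have hden : ∏ k ∈ Finset.Icc 1 (n - 1), (2 * u * ω ^ k)
      = (2 * u) ^ (n - 1) * ∏ k ∈ Finset.Icc 1 (n - 1), ω ^ k := by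
    rw [Finset.prod_mul_distrib, Finset.prod_const, Nat.card_Icc,
      show n - 1 + 1 - 1 = n - 1 from by omega]
  have hre : ∏ k ∈ Finset.Icc 1 (n - 1), (u - ω ^ (2 * n - k))
      = ∏ j ∈ Finset.Icc (n + 1) (2 * n - 1), (u - ω ^ j) := by
    apply Finset.prod_nbij' (fun k => 2 * n - k) (fun j => 2 * n - j)
    · intro a ha; simp only [Finset.mem_Icc] at ha ⊢; omega
    · intro a ha; simp only [Finset.mem_Icc] at ha ⊢; omega
    · intro a ha; simp only [Finset.mem_Icc] at ha; omega
    · intro a ha; simp only [Finset.mem_Icc] at ha; omega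
    · intro a ha; rfl
  have hωn : ω ^ n = -1 := by
    have h2 : (ω ^ n) ^ 2 = 1 := by
      rw [← pow_mul, show n * 2 = 2 * n from by omega, hprim.pow_eq_one]
    have h3 : (ω ^ n - 1) * (ω ^ n + 1) = 0 := by linear_combination h2
    rcases mul_eq_zero.mp h3 with h4 | h4
    · exact absurd (by linear_combination h4) (hprim.pow_ne_one_of_pos_of_lt (by omega) (by omega))
    · linear_combination h4
  have hsplit : ∏ j ∈ Finset.range (2 * n), (u - ω ^ j)
      = ((u - ω ^ 0) * (u - ω ^ n)) *
        ((∏ k ∈ Finset.Icc 1 (n - 1), (u - ω ^ k)) *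
          ∏ j ∈ Finset.Icc (n + 1) (2 * n - 1), (u - ω ^ j)) := by
    have hset : Finset.range (2 * n)
        = (({0} : Finset ℕ) ∪ {n}) ∪ (Finset.Icc 1 (n - 1) ∪ Finset.Icc (n + 1) (2 * n - 1)) := by
      ext j; simp only [Finset.mem_range, Finset.mem_union, Finset.mem_singleton, Finset.mem_Icc]
      omega
    have d1 : Disjoint ({0} : Finset ℕ) {n} := by
      rw [Finset.disjoint_left]; intro a ha hb
      simp only [Finset.mem_singleton] at ha hb; omega
    have d2 : Disjoint (Finset.Icc 1 (n - 1)) (Finset.Icc (n + 1) (2 * n - 1)) := by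
      rw [Finset.disjoint_left]; intro a ha hb
      simp only [Finset.mem_Icc] at ha hb; omega
    have d3 : Disjoint (({0} : Finset ℕ) ∪ {n})
        (Finset.Icc 1 (n - 1) ∪ Finset.Icc (n + 1) (2 * n - 1)) := by
      rw [Finset.disjoint_left]; intro a ha hb
      simp only [Finset.mem_union, Finset.mem_singleton, Finset.mem_Icc] at ha hb; omega
    rw [hset, Finset.prod_union d3, Finset.prod_union d1, Finset.prod_union d2,
      Finset.prod_singleton, Finset.prod_singleton]
  have hN : (u - 1) * (u + 1) *
      ((∏ k ∈ Finset.Icc 1 (n - 1), (u - ω ^ k)) *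
        ∏ k ∈ Finset.Icc 1 (n - 1), (u - ω ^ (2 * n - k))) = u ^ (2 * n) - 1 := by
    rw [hre, ← prod_sub_pow_aux (show 2 * n ≠ 0 by omega) hprim u, hsplit, pow_zero, hωn]
    ring
  have hW0 : (∏ k ∈ Finset.Icc 1 (n - 1), ω ^ k) ≠ 0 :=
    Finset.prod_ne_zero_iff.mpr (fun k _ => pow_ne_zero _ hω0)
  rw [hB2, hden, eq_div_iff
      (mul_ne_zero (pow_ne_zero _ (mul_ne_zero two_ne_zero hu)) hW0)] at hprodfac
  set P0 := ∏ x ∈ Finset.Icc 1 (n - 1), ((Real.cos φ : ℂ) - ((Real.cos (Real.pi * x / n) : ℝ) : ℂ))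
    with hP0def
  set A := ∏ k ∈ Finset.Icc 1 (n - 1), (u - ω ^ k) with hAdef
  set Cp := ∏ k ∈ Finset.Icc 1 (n - 1), (u - ω ^ (2 * n - k)) with hCpdef
  have he : u ^ (n - 1) * u = u ^ n := by rw [← pow_succ]; congr 1; omega
  have h2n' : u ^ (2 * n) = (u ^ (n - 1) * u) ^ 2 := by
    rw [he, ← pow_mul]; congr 1; omega
  rw [h2n'] at hN
  have he0 : u ^ (n - 1) ≠ 0 := pow_ne_zero _ hu
  have hP0 : P0 * (2 ^ (n - 1) * u ^ (n - 1)) = A * Cp := by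
    apply mul_right_cancel₀ hW0
    rw [mul_pow] at hprodfac
    linear_combination hprodfac
  have hun : Complex.exp ((↑(↑n * φ) : ℂ) * Complex.I) = u ^ n := by
    rw [hu_def, ← Complex.exp_nat_mul]; congr 1; push_cast; ring
  rw [sin_cast φ, sin_cast ((n : ℝ) * φ), hun, ← he, ← hu_def]
  field_simp
  linear_combination (1 - u ^ 2) * hP0 - hN

/-- The derivative of `f_t` factors as `n * ∏_{k=1}^{n-1} (X - cos (π k / n))`;
in particular its roots do not depend on `t`. -/
theorem derivative_factors (n : ℕ) (hn : 2 ≤ n)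
    (ζ : ℂ) (hζ : ζ = Complex.exp (2 * Real.pi * Complex.I / n))
    (t : ℂ) (ht : ‖t‖ = 1) :
    derivative (∏ k ∈ Finset.range n, (X - C (Complex.re (t * ζ ^ k)))) =
      C (n : ℝ) * ∏ k ∈ Finset.Icc 1 (n - 1), (X - C (Real.cos (Real.pi * k / n))) := by
  set p : ℝ[X] := ∏ k ∈ Finset.range n, (X - C (Complex.re (t * ζ ^ k))) with hp
  set q : ℝ[X] := C (n : ℝ) * ∏ k ∈ Finset.Icc 1 (n - 1), (X - C (Real.cos (Real.pi * k / n)))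
    with hq
  have hA : ∀ φ : ℝ, Polynomial.eval (Real.cos φ) p
      = (Real.cos (n * φ) - (t ^ n).re) / 2 ^ (n - 1) := by
    intro φ
    rw [hp, Polynomial.eval_prod]
    simp only [Polynomial.eval_sub, Polynomial.eval_X, Polynomial.eval_C]
    exact evalA n hn ζ hζ t ht φ
  have hkey : ∀ φ : ℝ, Polynomial.eval (Real.cos φ) (derivative p) * Real.sin φ
      = (n : ℝ) * Real.sin (n * φ) / 2 ^ (n - 1) := by
    intro φ
    have h1 : HasDerivAt (fun y : ℝ => Polynomial.eval (Real.cos y) p)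
        (Polynomial.eval (Real.cos φ) (derivative p) * (-Real.sin φ)) φ :=
      (p.hasDerivAt (Real.cos φ)).comp φ (Real.hasDerivAt_cos φ)
    have hinner : HasDerivAt (fun y : ℝ => (n : ℝ) * y) ((n : ℝ) * 1) φ :=
      (hasDerivAt_id φ).const_mul (n : ℝ)
    have h2 : HasDerivAt (fun y : ℝ => (Real.cos ((n : ℝ) * y) - (t ^ n).re) / 2 ^ (n - 1))
        ((-Real.sin ((n : ℝ) * φ) * ((n : ℝ) * 1)) / 2 ^ (n - 1)) φ :=
      (((Real.hasDerivAt_cos ((n : ℝ) * φ)).comp φ hinner).sub_const ((t ^ n).re)).div_const _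
    have heq : (fun y : ℝ => Polynomial.eval (Real.cos y) p)
        = fun y : ℝ => (Real.cos ((n : ℝ) * y) - (t ^ n).re) / 2 ^ (n - 1) := funext hA
    rw [heq] at h1
    have huniq := h1.unique h2
    linear_combination -huniq
  have hRHS : ∀ φ : ℝ, Polynomial.eval (Real.cos φ) q * Real.sin φ
      = (n : ℝ) * Real.sin (n * φ) / 2 ^ (n - 1) := by
    intro φ
    rw [hq]
    simp only [Polynomial.eval_mul, Polynomial.eval_C, Polynomial.eval_prod,
      Polynomial.eval_sub, Polynomial.eval_X]
    have hB := evalB n hn φ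
    have h2 : (2 : ℝ) ^ (n - 1) ≠ 0 := pow_ne_zero _ two_ne_zero
    field_simp
    linear_combination hB
  apply Polynomial.eq_of_infinite_eval_eq
  apply Set.Infinite.mono (s := Set.Ioo (-1 : ℝ) 1) _ (Set.Ioo_infinite (by norm_num))
  intro x hx
  simp only [Set.mem_setOf_eq]
  obtain ⟨hx1, hx2⟩ := hx
  have hφ : Real.cos (Real.arccos x) = x := Real.cos_arccos hx1.le hx2.le
  have hsin : Real.sin (Real.arccos x) ≠ 0 := by
    rw [Real.sin_arccos]
    have : (0 : ℝ) < 1 - x ^ 2 := by nlinarith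
    positivity
  have h1 := hkey (Real.arccos x)
  have h2 := hRHS (Real.arccos x)
  rw [hφ] at h1 h2
  exact mul_right_cancel₀ hsin (h1.trans h2.symm)
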